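/- Let F be an infinite field, A ∈ F^{m×m}, B_i ∈ F^{m×r_i}, C_i ∈ F^{q_i×m} for i=1,…,v, λ ∈ F. Then det(λI − A − Σ_i B_i K_i C_i) = 0 for all choices K_i ∈ F^{r_i×q_i} if and only if the matrix λI − A − Σ_i B_i K_i C_i, regarded over the rational function field F(K) in indeterminate entries of the K_i, has rank strictly less than m. -/

import Mathlib

open Matrix

lemma rank_lt_iff_det_eq_zero {K : Type*} [Field K] {m : ℕ} (M : Matrix (Fin m) (Fin m) K) :
    M.rank < m ↔ M.det = 0 := by
  constructor
  · intro h
    by_contra hd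
    have : IsUnit M := (Matrix.isUnit_iff_isUnit_det M).2 (isUnit_iff_ne_zero.2 hd)
    have := Matrix.rank_of_isUnit M this
    simp [this] at h
  · intro h
    obtain ⟨v, hv, hMv⟩ := (Matrix.exists_mulVec_eq_zero_iff).2 h
    have hker : v ∈ LinearMap.ker M.mulVecLin := by
      simpa [Matrix.mulVecLin] using hMv
    have h1 : 1 ≤ Module.finrank K (LinearMap.ker M.mulVecLin) := by
      rw [Nat.one_le_iff_ne_zero]
      intro h0
      have hbot : LinearMap.ker M.mulVecLin = ⊥ :=
        (Submodule.finrank_eq_zero (R := K) (S := LinearMap.ker M.mulVecLin)).1 h0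
      rw [hbot] at hker
      exact hv (by simpa using hker)
    have hrn : M.rank + Module.finrank K (LinearMap.ker M.mulVecLin) = m := by
      rw [Matrix.rank]
      simpa using LinearMap.finrank_range_add_finrank_ker M.mulVecLin
    omega

lemma map_generic {F S : Type*} [Field F] [CommRing S] {v m : ℕ} {r q : Fin v → ℕ}
    (A : Matrix (Fin m) (Fin m) F) (B : ∀ i, Matrix (Fin m) (Fin (r i)) F)
    (C : ∀ i, Matrix (Fin (q i)) (Fin m) F) (l : F)
    (f : MvPolynomial ((i : Fin v) × (Fin (r i) × Fin (q i))) F →+* S) :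
    (((MvPolynomial.C l : MvPolynomial ((i : Fin v) × (Fin (r i) × Fin (q i))) F) •
        (1 : Matrix (Fin m) (Fin m) (MvPolynomial ((i : Fin v) × (Fin (r i) × Fin (q i))) F))
      - A.map MvPolynomial.C
      - ∑ i, ((B i).map MvPolynomial.C * (Matrix.of fun a b => MvPolynomial.X (Sigma.mk i (a,b)) :
            Matrix (Fin (r i)) (Fin (q i)) (MvPolynomial ((i : Fin v) × (Fin (r i) × Fin (q i))) F)) : Matrix (Fin m) (Fin (q i)) (MvPolynomial ((i : Fin v) × (Fin (r i) × Fin (q i))) F))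
          * (C i).map (MvPolynomial.C : F →+* MvPolynomial ((i : Fin v) × (Fin (r i) × Fin (q i))) F)).map f)
    = (f (MvPolynomial.C l)) • 1 - A.map (f ∘ MvPolynomial.C)
      - ∑ i, (B i).map (f ∘ MvPolynomial.C) * (Matrix.of fun a b => f (MvPolynomial.X ⟨i,(a,b)⟩))
          * (C i).map (f ∘ MvPolynomial.C) := by
  ext j k
  simp [Matrix.mul_apply, Matrix.sum_apply, Matrix.one_apply, map_sum, _root_.map_mul, apply_ite,
    Matrix.smul_apply, smul_eq_mul]
  simp only [Finset.sum_mul]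
  erw [Finset.sum_congr rfl fun x _ => Finset.sum_congr rfl fun y _ => by erw [Matrix.mul_apply]]
  simp [map_sum, Finset.sum_mul]

theorem stmt_11 {F : Type*} [Field F] [Infinite F] {v m : ℕ} {r q : Fin v → ℕ}
    (A : Matrix (Fin m) (Fin m) F)
    (B : ∀ i, Matrix (Fin m) (Fin (r i)) F)
    (C : ∀ i, Matrix (Fin (q i)) (Fin m) F) (l : F) :
    (∀ K : ∀ i, Matrix (Fin (r i)) (Fin (q i)) F,
        (l • (1 : Matrix (Fin m) (Fin m) F) - A - ∑ i, B i * K i * C i).det = 0) ↔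
      (let R := FractionRing (MvPolynomial ((i : Fin v) × (Fin (r i) × Fin (q i))) F)
       let ι : F →+* R :=
         (algebraMap (MvPolynomial ((i : Fin v) × (Fin (r i) × Fin (q i))) F) R).comp
           MvPolynomial.C
       let K : ∀ i, Matrix (Fin (r i)) (Fin (q i)) R := fun i =>
         Matrix.of fun a b =>
           algebraMap (MvPolynomial ((i : Fin v) × (Fin (r i) × Fin (q i))) F) R
             (MvPolynomial.X ⟨i, (a, b)⟩)
       (ι l • (1 : Matrix (Fin m) (Fin m) R) - A.map ⇑ι -
          ∑ i, (B i).map ⇑ι * K i * (C i).map ⇑ι).rank < m) := by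
  classical
  set σ := ((i : Fin v) × (Fin (r i) × Fin (q i))) with hσ
  set P := MvPolynomial σ F with hP
  set M₀ : Matrix (Fin m) (Fin m) P :=
    (MvPolynomial.C l : P) • (1 : Matrix (Fin m) (Fin m) P)
      - A.map MvPolynomial.C
      - ∑ i, ((B i).map MvPolynomial.C * (Matrix.of fun a b => MvPolynomial.X (Sigma.mk i (a,b)) :
            Matrix (Fin (r i)) (Fin (q i)) P) : Matrix (Fin m) (Fin (q i)) P)
          * (C i).map (MvPolynomial.C : F →+* P) with hM₀
  -- left side characterization
  have hev : ∀ (y : σ → F) (K : ∀ i, Matrix (Fin (r i)) (Fin (q i)) F),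
      (∀ i a b, y ⟨i, (a, b)⟩ = K i a b) →
      (MvPolynomial.eval y) M₀.det
        = (l • (1 : Matrix (Fin m) (Fin m) F) - A - ∑ i, B i * K i * C i).det := by
    intro y K hy
    rw [(MvPolynomial.eval y).map_det, RingHom.mapMatrix_apply, hM₀, map_generic]
    congr 1
    ext j k
    simp [Matrix.sub_apply, Matrix.smul_apply, Matrix.one_apply, Matrix.sum_apply,
      Matrix.mul_apply, Matrix.map_apply, Function.comp, hy, smul_eq_mul, apply_ite]
  have hleft : (∀ K : ∀ i, Matrix (Fin (r i)) (Fin (q i)) F,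
        (l • (1 : Matrix (Fin m) (Fin m) F) - A - ∑ i, B i * K i * C i).det = 0)
      ↔ M₀.det = 0 := by
    constructor
    · intro h
      apply MvPolynomial.funext (p := M₀.det) (q := 0)
      intro x
      rw [map_zero, hev x (fun i => Matrix.of fun a b => x ⟨i, (a, b)⟩) (fun i a b => rfl)]
      exact h _
    · intro h K
      have := hev (fun s : σ => K s.1 s.2.1 s.2.2) K (fun i a b => rfl)
      rw [h, map_zero] at this
      exact this.symm
  rw [hleft]
  -- right side
  simp only [rank_lt_iff_det_eq_zero]
  set R := FractionRing P with hR
  have hmap := map_generic A B C l (algebraMap P R)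
  have hmat : (((algebraMap P R).comp MvPolynomial.C) l • (1 : Matrix (Fin m) (Fin m) R)
      - A.map ⇑((algebraMap P R).comp MvPolynomial.C) -
      ∑ i, (B i).map ⇑((algebraMap P R).comp MvPolynomial.C) *
        (Matrix.of fun a b => algebraMap P R (MvPolynomial.X ⟨i, (a, b)⟩)) *
        (C i).map ⇑((algebraMap P R).comp MvPolynomial.C)) = M₀.map (algebraMap P R) := by
    rw [hM₀, hmap]
    rfl
  rw [hmat, ← RingHom.mapMatrix_apply, ← (algebraMap P R).map_det]
  constructor
  · intro h
    rw [h, map_zero]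
  · intro h
    exact IsFractionRing.injective P R (by rw [h, map_zero])
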